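/- Let X be a finite set, C a choice function on X, and A a binary relation on X. Define the (C)-modification C^(C) by: C^(C)(S) = {x} if there is x ∈ S with C({x,y}) = {x} for all y ∈ S (such an x is unique if it exists), and C^(C)(S) = C(S) otherwise. Then C^(C) is again a choice function, and: if C satisfies (wIm_A) then C^(C) satisfies (wIm_A), and if C satisfies (Im_A) then C^(C) satisfies (Im_A). -/

import Mathlib

namespace SC

variable {X : Type*}

/-- `tr_S(A)`: the reflexive-transitive hull of the restriction of `A` to `S`. -/
def trS (S : Set X) (A : X → X → Prop) : X → X → Prop :=
  Relation.ReflTransGen (fun a b => a ∈ S ∧ b ∈ S ∧ A a b)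

/-- `C` is a choice function: it assigns to each nonempty `S` a nonempty subset of `S`. -/
def IsChoice (C : Set X → Set X) : Prop :=
  ∀ S : Set X, S.Nonempty → (C S).Nonempty ∧ C S ⊆ S

/-- Condition (wIm_A): weak immunity from `A`-arguments. -/
def wIm (C : Set X → Set X) (A : X → X → Prop) : Prop :=
  ∀ S : Set X, S.Nonempty → ∀ x ∈ C S, ∀ y ∈ S, y ≠ x → A y x →
    ∃ z ∈ S, z ≠ y ∧ A z y

/-- Condition (Im_A): immunity from `A`-arguments. -/
def Im (C : Set X → Set X) (A : X → X → Prop) : Prop :=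
  ∀ S : Set X, S.Nonempty → ∀ x ∈ C S, ∀ y ∈ S, A y x → trS S A x y

open Classical in
/-- The (C)-modification `C^(C)` of a choice function `C`: it returns `{x}` if `x ∈ S` is
such that `C({x,y}) = {x}` for all `y ∈ S` (such an `x` is unique if it exists), and
`C(S)` otherwise. -/
noncomputable def Cmod (C : Set X → Set X) (S : Set X) : Set X :=
  if h : ∃ x, x ∈ S ∧ ∀ y ∈ S, C {x, y} = {x} then {h.choose} else C S

theorem trS_mono {S T : Set X} (hST : S ⊆ T) (A : X → X → Prop) {a b : X}
    (h : trS S A a b) : trS T A a b :=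
  Relation.ReflTransGen.mono (p := fun a b => a ∈ T ∧ b ∈ T ∧ A a b)
    (by intro _ _ ⟨h1, h2, h3⟩; exact ⟨hST h1, hST h2, h3⟩) _ _ h

end SC

open SC in
/-- the (C)-modification of a choice function is a choice function and
preserves (wIm_A) and (Im_A). -/
theorem stmt6 {X : Type*} [Fintype X] (C : Set X → Set X) (A : X → X → Prop)
    (hC : IsChoice C) :
    IsChoice (Cmod C) ∧ (wIm C A → wIm (Cmod C) A) ∧ (Im C A → Im (Cmod C) A) := by
  refine ⟨?_, ?_, ?_⟩
  · intro S hS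
    unfold Cmod
    split
    · next h =>
      refine ⟨⟨h.choose, rfl⟩, ?_⟩
      intro z hz
      simp only [Set.mem_singleton_iff] at hz
      subst hz
      exact h.choose_spec.1
    · exact hC S hS
  · intro hw S hS x hx y hy hyx hAyx
    unfold Cmod at hx
    split at hx
    · next h =>
      simp only [Set.mem_singleton_iff] at hx
      have hspec := h.choose_spec
      rw [← hx] at hspec
      have hCxy := hspec.2 y hy
      have hxmem : x ∈ C {x, y} := by rw [hCxy]; rfl
      obtain ⟨z, hz, hzy, hAzy⟩ := hw {x, y} ⟨x, Or.inl rfl⟩ x hxmem y (Or.inr rfl) hyx hAyx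
      rcases hz with hz | hz
      · subst hz
        exact ⟨z, hspec.1, hzy, hAzy⟩
      · exact absurd hz hzy
    · exact hw S hS x hx y hy hyx hAyx
  · intro hi S hS x hx y hy hAyx
    unfold Cmod at hx
    split at hx
    · next h =>
      simp only [Set.mem_singleton_iff] at hx
      have hspec := h.choose_spec
      rw [← hx] at hspec
      have hCxy := hspec.2 y hy
      have hxmem : x ∈ C {x, y} := by rw [hCxy]; rfl
      have := hi {x, y} ⟨x, Or.inl rfl⟩ x hxmem y (Or.inr rfl) hAyx
      refine trS_mono ?_ A this
      intro z hz
      rcases hz with hz | hz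
      · exact hz ▸ hspec.1
      · exact hz ▸ hy
    · exact hi S hS x hx y hy hAyx
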